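/- Let N be a normal subgroup of a finite group G and let p be an odd prime. If the coset Nx is a real element of G/N whose order is a power of p, then Nx = Ny for some element y of G such that y is real in G and the order of y is a power of p. -/

import Mathlib

open Subgroup

private lemma conj_eq_inv_symm' {H : Type*} [Group H] {h a : H} (hh : h * a * h⁻¹ = a⁻¹) :
    h⁻¹ * a * h = a⁻¹ := by
  have k1 : h⁻¹ * a⁻¹ * h = a := by rw [← hh]; group
  calc h⁻¹ * a * h = (h⁻¹ * a⁻¹ * h)⁻¹ := by group
    _ = a⁻¹ := by rw [k1]

private lemma conj_inv_eq' {H : Type*} [Group H] {h a : H} (hh : h * a * h⁻¹ = a⁻¹) :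
    h * a⁻¹ * h⁻¹ = a := by
  calc h * a⁻¹ * h⁻¹ = (h * a * h⁻¹)⁻¹ := by group
    _ = a := by rw [hh, inv_inv]

private lemma conj_pow_odd {H : Type*} [Group H] {h a : H} (hh : h * a * h⁻¹ = a⁻¹)
    {m : ℕ} (hm : Odd m) : h ^ m * a * (h ^ m)⁻¹ = a⁻¹ := by
  obtain ⟨j, rfl⟩ := hm
  induction j with
  | zero => simpa using hh
  | succ i ih =>
    have h21 : 2 * (i + 1) + 1 = 2 + (2 * i + 1) := by ring
    rw [h21, pow_add]
    calc h ^ 2 * h ^ (2 * i + 1) * a * (h ^ 2 * h ^ (2 * i + 1))⁻¹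
        = h ^ 2 * (h ^ (2 * i + 1) * a * (h ^ (2 * i + 1))⁻¹) * (h ^ 2)⁻¹ := by group
      _ = h ^ 2 * a⁻¹ * (h ^ 2)⁻¹ := by rw [ih]
      _ = a⁻¹ := by
          rw [sq]
          calc h * h * a⁻¹ * (h * h)⁻¹ = h * (h * a⁻¹ * h⁻¹) * h⁻¹ := by group
            _ = h * a * h⁻¹ := by rw [conj_inv_eq' hh]
            _ = a⁻¹ := hh

private lemma conj_mem_zpowers' {H : Type*} [Group H] {h a : H} (hh : h * a * h⁻¹ = a⁻¹)
    {w : H} (hw : w ∈ Subgroup.zpowers a) : h * w * h⁻¹ ∈ Subgroup.zpowers a := by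
  obtain ⟨j, rfl⟩ := hw
  refine ⟨-j, ?_⟩
  show a ^ (-j) = h * a ^ j * h⁻¹
  rw [zpow_neg, ← inv_zpow, ← hh, conj_zpow]

private lemma conj_pow_mem_iff' {H : Type*} [Group H] {A : Subgroup H} {h : H}
    (hh : ∀ v : H, h * v * h⁻¹ ∈ A ↔ v ∈ A) (m : ℕ) :
    ∀ v : H, h ^ m * v * (h ^ m)⁻¹ ∈ A ↔ v ∈ A := by
  induction m with
  | zero => simp
  | succ i ih =>
    intro v
    have e : h ^ (i + 1) * v * (h ^ (i + 1))⁻¹ = h * (h ^ i * v * (h ^ i)⁻¹) * h⁻¹ := by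
      rw [pow_succ']; group
    rw [e, hh, ih]

private lemma isPGroup_zpowers_of_pow' {H : Type*} [Group H] {h : H} {p k : ℕ}
    (hh : h ^ p ^ k = 1) : IsPGroup p (Subgroup.zpowers h) := by
  intro q
  obtain ⟨j, hj⟩ := q.2
  refine ⟨k, ?_⟩
  have hq : (q : H) ^ p ^ k = 1 := by
    have : (h ^ j) ^ (p ^ k : ℕ) = 1 := by
      rw [← zpow_natCast (h ^ j), ← zpow_mul, mul_comm, zpow_mul, zpow_natCast, hh, one_zpow]
    rw [← hj]; exact this
  exact Subtype.ext (by simpa using hq)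


open Subgroup MulAction Pointwise

theorem stmt_8 (G : Type*) [Group G] [Finite G] (N : Subgroup G) [N.Normal]
    (p : ℕ) (hp : p.Prime) (hodd : Odd p) (x : G)
    (hreal : IsConj ((x : G ⧸ N)) ((x : G ⧸ N))⁻¹)
    (horder : ∃ a : ℕ, orderOf (x : G ⧸ N) = p ^ a) :
    ∃ y : G, (y : G ⧸ N) = (x : G ⧸ N) ∧ IsConj y y⁻¹ ∧
      ∃ b : ℕ, orderOf y = p ^ b := by
  classical
  haveI : Fact p.Prime := ⟨hp⟩
  haveI : Fact (Nat.Prime 2) := ⟨Nat.prime_two⟩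
  obtain ⟨a, ha⟩ := horder
  set π := QuotientGroup.mk' N with hπdef
  have hπ : ∀ v : G, π v = (v : G ⧸ N) := fun _ => rfl
  -- dispose of the trivial case a = 0
  rcases Nat.eq_zero_or_pos a with rfl | hapos
  · refine ⟨1, ?_, by rw [inv_one], 0, by rw [orderOf_one, pow_zero]⟩
    have : (x : G ⧸ N) = 1 := orderOf_eq_one_iff.mp (by simpa using ha)
    simp [this]
  obtain ⟨c, hc⟩ := isConj_iff.mp hreal
  obtain ⟨g0, rfl⟩ := QuotientGroup.mk'_surjective N c
  rw [← hπ x] at hc ha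
  rw [← hπdef] at hc
  -- hc : π g0 * π x * (π g0)⁻¹ = (π x)⁻¹
  -- Step 1 : a p-element u with π u = π x
  have hn0 : orderOf x ≠ 0 := (orderOf_pos x).ne'
  set n := orderOf x with hndef
  set k := n.factorization p with hkdef
  set m := ordCompl[p] n with hmdef
  have hnm : p ^ k * m = n := Nat.ordProj_mul_ordCompl_eq_self n p
  have hdvd : orderOf (π x) ∣ n := by
    rw [hπ]; exact orderOf_map_dvd π x
  have hak : a ≤ k := (Nat.Prime.pow_dvd_iff_le_factorization hp hn0).mp (ha ▸ hdvd)
  have hklt : 1 < p ^ k :=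
    Nat.one_lt_pow (by omega) hp.one_lt
  have hcop : Nat.Coprime m (p ^ k) := ((Nat.coprime_ordCompl hp hn0).pow_left k).symm
  obtain ⟨r, -, hr⟩ := Nat.exists_mul_mod_eq_one_of_coprime hcop hklt
  set u := x ^ (m * r) with hudef
  have hu1 : u ^ p ^ k = 1 := by
    rw [hudef, ← pow_mul]
    apply orderOf_dvd_iff_pow_eq_one.mp
    exact ⟨r, by rw [← hndef, ← hnm]; ring⟩
  have humk : π u = π x := by
    rw [hudef, map_pow]
    have hmod : m * r ≡ 1 [MOD p ^ a] := by
      have h1 : m * r ≡ 1 [MOD p ^ k] := by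
        unfold Nat.ModEq
        rw [hr, Nat.one_mod_eq_one.mpr (by omega)]
      exact h1.of_dvd (pow_dvd_pow p hak)
    calc (π x) ^ (m * r) = (π x) ^ 1 := (pow_eq_pow_iff_modEq).mpr (by rw [ha]; exact hmod)
      _ = π x := pow_one _
  -- Step 2 : the preimage K of ⟨π x⟩, and a Sylow p-subgroup P of K containing u
  set K : Subgroup G := (Subgroup.zpowers (π x)).comap π with hKdef
  have hxK : x ∈ K := by
    rw [hKdef, Subgroup.mem_comap]
    exact Subgroup.mem_zpowers _
  have huK : u ∈ K := by
    rw [hKdef, Subgroup.mem_comap, humk]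
    exact Subgroup.mem_zpowers _
  have hNK : N ≤ K := by
    intro v hv
    rw [hKdef, Subgroup.mem_comap]
    have : π v = 1 := (QuotientGroup.eq_one_iff v).mpr hv
    rw [this]; exact one_mem _
  -- conjugation by g0 and g0⁻¹ preserves K
  have hcinv : (π g0)⁻¹ * π x * ((π g0)⁻¹)⁻¹ = (π x)⁻¹ := by
    rw [inv_inv]; exact conj_eq_inv_symm' hc
  have hK1 : ∀ v, v ∈ K → g0 * v * g0⁻¹ ∈ K := by
    intro v hv
    rw [hKdef, Subgroup.mem_comap] at hv ⊢
    rw [map_mul, map_mul, map_inv]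
    exact conj_mem_zpowers' hc hv
  have hK2 : ∀ v, v ∈ K → g0⁻¹ * v * g0 ∈ K := by
    intro v hv
    rw [hKdef, Subgroup.mem_comap] at hv ⊢
    rw [map_mul, map_mul, map_inv]
    have := conj_mem_zpowers' hcinv hv
    simpa using this
  set u' : ↥K := ⟨u, huK⟩ with hu'def
  have hu'1 : u' ^ p ^ k = 1 := by
    ext
    simpa using hu1
  obtain ⟨P, hZP⟩ := (isPGroup_zpowers_of_pow' hu'1).exists_le_sylow
  have hu'P : u' ∈ P := hZP (Subgroup.mem_zpowers u')
  -- Step 3 : conjugation by g0 as an automorphism of K; Sylow conjugacy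
  set φ : ↥K ≃* ↥K :=
    { toFun := fun v => ⟨g0 * v * g0⁻¹, hK1 v v.2⟩
      invFun := fun v => ⟨g0⁻¹ * v * g0, hK2 v v.2⟩
      left_inv := fun v => by ext; simp [mul_assoc]
      right_inv := fun v => by ext; simp [mul_assoc]
      map_mul' := fun v w => by ext; simp [mul_assoc] } with hφdef
  set Q : Sylow p ↥K :=
    { toSubgroup := P.1.map φ.toMonoidHom
      isPGroup' := P.2.map _
      is_maximal' := by
        intro R hR hle
        have h1 : P.1 ≤ R.comap φ.toMonoidHom := Subgroup.map_le_iff_le_comap.mp hle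
        have h2 := P.3 (hR.comap_of_injective φ.toMonoidHom φ.injective) h1
        rw [← h2, Subgroup.map_comap_eq_self_of_surjective φ.surjective] } with hQdef
  haveI : Finite (Sylow p ↥K) :=
    Finite.of_injective (fun (S : Sylow p ↥K) => (S : Set ↥K)) SetLike.coe_injective
  obtain ⟨kk, hkk⟩ := MulAction.exists_smul_eq ↥K Q P
  set g1 : G := ↑kk * g0 with hg1def
  set P' : Subgroup G := P.1.map K.subtype with hP'def
  have hP'p : IsPGroup p P' := P.2.map _
  have huP' : u ∈ P' := ⟨u', hu'P, rfl⟩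
  have hP'memK : ∀ v : G, v ∈ P' → v ∈ K := by
    rintro v ⟨w, hw, rfl⟩
    exact w.2
  -- normalization of P' by g1
  have key : ∀ w : ↥K, (kk * w * kk⁻¹ : ↥K) ∈ P.1 ↔ w ∈ Q.1 := by
    intro w
    have h1 : P.1 = MulAut.conj kk • Q.1 := by
      rw [← hkk]; rfl
    rw [h1, Subgroup.mem_pointwise_smul_iff_inv_smul_mem]
    have h2 : (MulAut.conj kk)⁻¹ • (kk * w * kk⁻¹) = w := by
      simp [MulAut.smul_def, mul_assoc]
    rw [h2]
  have keyQ : ∀ w : ↥K, φ w ∈ Q.1 ↔ w ∈ P.1 := by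
    intro w
    have h1 : Q.1 = P.1.map φ.toMonoidHom := rfl
    rw [h1, Subgroup.mem_map_equiv]
    have : φ.symm (φ w) = w := φ.symm_apply_apply w
    rw [this]
  have hg1K : ∀ v : G, v ∈ K → g1 * v * g1⁻¹ ∈ K := by
    intro v hv
    have h1 : (↑kk : G) * (g0 * v * g0⁻¹) * (↑kk)⁻¹ ∈ K :=
      K.mul_mem (K.mul_mem kk.2 (hK1 v hv)) (K.inv_mem kk.2)
    have h2 : g1 * v * g1⁻¹ = (↑kk : G) * (g0 * v * g0⁻¹) * (↑kk)⁻¹ := by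
      rw [hg1def]; group
    rw [h2]; exact h1
  have hg1K' : ∀ v : G, v ∈ K → g1⁻¹ * v * g1 ∈ K := by
    intro v hv
    have h1 : g0⁻¹ * ((↑kk)⁻¹ * v * ↑kk) * g0 ∈ K :=
      hK2 _ (K.mul_mem (K.mul_mem (K.inv_mem kk.2) hv) kk.2)
    have h2 : g1⁻¹ * v * g1 = g0⁻¹ * ((↑kk)⁻¹ * v * ↑kk) * g0 := by
      rw [hg1def]; group
    rw [h2]; exact h1
  have hcoe : ∀ w : ↥K, ((kk * φ w * kk⁻¹ : ↥K) : G) = g1 * ↑w * g1⁻¹ := by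
    intro w
    show (↑kk : G) * (g0 * ↑w * g0⁻¹) * (↑kk)⁻¹ = g1 * ↑w * g1⁻¹
    rw [hg1def]; group
  have hg1norm : ∀ v : G, g1 * v * g1⁻¹ ∈ P' ↔ v ∈ P' := by
    intro v
    constructor
    · rintro ⟨w, hw, hwv⟩
      have hvK : v ∈ K := by
        have h1 : g1 * v * g1⁻¹ ∈ K := hwv ▸ w.2
        have h2 : v = g1⁻¹ * (g1 * v * g1⁻¹) * g1 := by group
        rw [h2]; exact hg1K' _ h1
      have hw' : w = kk * φ (⟨v, hvK⟩ : ↥K) * kk⁻¹ := by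
        apply Subtype.ext
        rw [hcoe]
        exact hwv
      have h3 : φ (⟨v, hvK⟩ : ↥K) ∈ Q.1 := (key _).mp (hw' ▸ hw)
      exact ⟨⟨v, hvK⟩, (keyQ _).mp h3, rfl⟩
    · rintro ⟨w, hw, rfl⟩
      refine ⟨kk * φ w * kk⁻¹, (key _).mpr ((keyQ _).mpr hw), hcoe w⟩
  -- g1 inverts π x modulo N
  have hg1c : π g1 * π x * (π g1)⁻¹ = (π x)⁻¹ := by
    obtain ⟨j, hj⟩ := kk.2
    have hcomm : Commute (π ↑kk) (π x) := by
      rw [← hj]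
      exact (Commute.refl (π x)).zpow_left j
    rw [hg1def, map_mul, mul_inv_rev]
    calc π ↑kk * π g0 * π x * ((π g0)⁻¹ * (π ↑kk)⁻¹)
        = π ↑kk * (π g0 * π x * (π g0)⁻¹) * (π ↑kk)⁻¹ := by group
      _ = π ↑kk * (π x)⁻¹ * (π ↑kk)⁻¹ := by rw [hc]
      _ = (π x)⁻¹ := by
          rw [hcomm.inv_right.eq]; group
  -- Step 4 : replace g1 by its 2-part g2
  have hg1n0 : orderOf g1 ≠ 0 := (orderOf_pos g1).ne'
  obtain ⟨e2, m1, hm1odd, hm1⟩ := Nat.exists_eq_two_pow_mul_odd hg1n0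
  set g2 : G := g1 ^ m1 with hg2def
  have hg2pow : g2 ^ 2 ^ e2 = 1 := by
    rw [hg2def, ← pow_mul]
    apply orderOf_dvd_iff_pow_eq_one.mp
    rw [hm1]; exact ⟨1, by ring⟩
  have hg2c : π g2 * π x * (π g2)⁻¹ = (π x)⁻¹ := by
    rw [hg2def, map_pow]
    exact conj_pow_odd hg1c hm1odd
  have hg2norm : ∀ v : G, g2 * v * g2⁻¹ ∈ P' ↔ v ∈ P' := by
    rw [hg2def]
    exact conj_pow_mem_iff' hg1norm m1
  have hg2norm' : ∀ v : G, g2⁻¹ * v * g2 ∈ P' ↔ v ∈ P' := by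
    intro v
    have e : g2 * (g2⁻¹ * v * g2) * g2⁻¹ = v := by group
    constructor
    · intro h
      have h2 := (hg2norm _).mpr h
      rwa [e] at h2
    · intro h
      apply (hg2norm (g2⁻¹ * v * g2)).mp
      rw [e]; exact h
  have hg2cinv : (π g2)⁻¹ * π x * (π g2) = (π x)⁻¹ := conj_eq_inv_symm' hg2c
  -- Step 5 : the set T of elements of P' lying in the coset of x
  set T : Set G := {v : G | v ∈ P' ∧ π v = π x} with hTdef
  have hσm1 : ∀ v : G, v ∈ T → g2 * v⁻¹ * g2⁻¹ ∈ T := by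
    rintro v ⟨hv1, hv2⟩
    refine ⟨(hg2norm v⁻¹).mpr (P'.inv_mem hv1), ?_⟩
    rw [map_mul, map_mul, map_inv, map_inv, hv2]
    exact conj_inv_eq' hg2c
  have hσm2 : ∀ v : G, v ∈ T → g2⁻¹ * v⁻¹ * g2 ∈ T := by
    rintro v ⟨hv1, hv2⟩
    refine ⟨(hg2norm' v⁻¹).mpr (P'.inv_mem hv1), ?_⟩
    rw [map_mul, map_mul, map_inv, map_inv, hv2]
    calc (π g2)⁻¹ * (π x)⁻¹ * π g2 = ((π g2)⁻¹ * π x * π g2)⁻¹ := by group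
      _ = ((π x)⁻¹)⁻¹ := by rw [hg2cinv]
      _ = π x := inv_inv _
  set σ : Equiv.Perm ↥T :=
    { toFun := fun v => ⟨g2 * (↑v)⁻¹ * g2⁻¹, hσm1 ↑v v.2⟩
      invFun := fun v => ⟨g2⁻¹ * (↑v)⁻¹ * g2, hσm2 ↑v v.2⟩
      left_inv := fun v => by
        ext
        show g2⁻¹ * (g2 * (↑v)⁻¹ * g2⁻¹)⁻¹ * g2 = ↑v
        group
      right_inv := fun v => by
        ext
        show g2 * (g2⁻¹ * (↑v)⁻¹ * g2)⁻¹ * g2⁻¹ = ↑v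
        group } with hσdef
  have hσapp : ∀ v : ↥T, (↑(σ v) : G) = g2 * (↑v)⁻¹ * g2⁻¹ := fun v => rfl
  have hσ2 : ∀ v : ↥T, (↑((σ ^ 2) v) : G) = g2 ^ 2 * ↑v * (g2 ^ 2)⁻¹ := by
    intro v
    rw [sq, Equiv.Perm.mul_apply, hσapp, hσapp, sq]
    group
  have hσ2t : ∀ t : ℕ, ∀ v : ↥T, (↑((σ ^ (2 * t)) v) : G) = g2 ^ (2 * t) * ↑v * (g2 ^ (2 * t))⁻¹ := by
    intro t
    induction t with
    | zero => intro v; simp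
    | succ i ih =>
      intro v
      have h1 : 2 * (i + 1) = 2 * i + 2 := by ring
      rw [h1, pow_add, Equiv.Perm.mul_apply, ih, hσ2, pow_add]
      group
  have horderσ : σ ^ 2 ^ (e2 + 1) = 1 := by
    ext v
    have h1 : (2 : ℕ) ^ (e2 + 1) = 2 * 2 ^ e2 := by ring
    have h2 : g2 ^ (2 * 2 ^ e2) = 1 := by
      rw [mul_comm, pow_mul, hg2pow, one_pow]
    show ↑((σ ^ 2 ^ (e2 + 1)) v) = ((1 : Equiv.Perm ↥T) v : G)
    rw [h1, hσ2t, h2]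
    simp
  -- Step 6 : counting -- |T| = |P' ⊓ N| is a power of p, hence odd
  have hTcard : ∃ s : ℕ, Nat.card ↥T = p ^ s := by
    have hInf : IsPGroup p ↥(P' ⊓ N) := hP'p.to_inf_left
    obtain ⟨s, hs⟩ := (IsPGroup.iff_card).mp hInf
    refine ⟨s, ?_⟩
    rw [← hs]
    apply Nat.card_congr
    refine
      { toFun := fun v => ⟨u⁻¹ * ↑v, Subgroup.mem_inf.mpr ⟨P'.mul_mem (P'.inv_mem huP') v.2.1, ?_⟩⟩
        invFun := fun w => ⟨u * ↑w, ⟨P'.mul_mem huP' (Subgroup.mem_inf.mp w.2).1, ?_⟩⟩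
        left_inv := fun v => by ext; show u * (u⁻¹ * ↑v) = ↑v; group
        right_inv := fun w => by ext; show u⁻¹ * (u * ↑w) = ↑w; group }
    · apply (QuotientGroup.eq_one_iff _).mp
      rw [← hπ, map_mul, map_inv, humk, v.2.2, inv_mul_cancel]
    · rw [map_mul, humk]
      have : π ↑w = 1 := (QuotientGroup.eq_one_iff _).mpr (Subgroup.mem_inf.mp w.2).2
      rw [this, mul_one]
  have hT2 : ¬ (2 ∣ Nat.card ↥T) := by
    obtain ⟨s, hs⟩ := hTcard
    rw [hs]
    intro h2
    have hodds : Odd (p ^ s) := hodd.pow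
    exact (Nat.not_even_iff_odd.mpr hodds) (even_iff_two_dvd.mpr h2)
  -- Step 7 : fixed point of the 2-group ⟨σ⟩ acting on T
  obtain ⟨y, hy⟩ :=
    (isPGroup_zpowers_of_pow' horderσ).nonempty_fixed_point_of_prime_not_dvd_card ↥T hT2
  have hfix : σ y = y := by
    have h1 := hy ⟨σ, Subgroup.mem_zpowers σ⟩
    simpa using h1
  have hyeq : g2 * (↑y)⁻¹ * g2⁻¹ = (↑y : G) := by
    have := congrArg Subtype.val hfix
    simpa [hσapp] using this
  refine ⟨↑y, y.2.2, ?_, ?_⟩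
  · apply isConj_iff.mpr
    refine ⟨g2, ?_⟩
    calc g2 * ↑y * g2⁻¹ = (g2 * (↑y)⁻¹ * g2⁻¹)⁻¹ := by group
      _ = (↑y : G)⁻¹ := by rw [hyeq]
  · obtain ⟨b', hb'⟩ := hP'p ⟨↑y, y.2.1⟩
    have hyb : (↑y : G) ^ p ^ b' = 1 := by
      have := congrArg Subtype.val hb'
      simpa using this
    obtain ⟨b, _, hb⟩ := (Nat.dvd_prime_pow hp).mp (orderOf_dvd_of_pow_eq_one hyb)
    exact ⟨b, hb⟩
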